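/- arXiv:1511.00773 — 4 statements merged into one kernel-verified Lean document; each statement's English description precedes it below -/
import Mathlib

section
/- Let G be a graph whose vertex set V is a finite subset of the positive integers. Then the chromatic quasisymmetric function satisfies X_G(x,t) = Σ_σ t^{asc σ} M_{(|σ_1|,…,|σ_ℓ|)}, where the sum is over all ordered partitions σ = (σ_1,…,σ_ℓ) of V into nonempty parts such that every σ_i is a stable set of G (no edge of G joins two vertices of σ_i), and asc σ is the number of edges {u,v} of G with u < v such that v lies in a strictly later part of σ than u. -/
open scoped Classical
open Finset

noncomputable section

/-- The monomial quasisymmetric function `M_α` (in variables `x_1, x_2, …` indexed by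
positive natural numbers), as a multivariate power series with coefficients in `ℤ[t]`. -/
def MQ (α : List ℕ) : MvPowerSeries ℕ (Polynomial ℤ) :=
  fun d => if ∃ f : Fin α.length → ℕ, StrictMono f ∧ (∀ j, 0 < f j) ∧
      d = ∑ j, Finsupp.single (f j) (α.get j) then 1 else 0

/-- `β` is a composition of `n`: a list of positive integers summing to `n`. -/
def IsComp (n : ℕ) (β : List ℕ) : Prop := (∀ b ∈ β, 0 < b) ∧ β.sum = n

/-- The bar set of a composition: its proper partial sums `β_1, β_1+β_2, …`. -/
def barSet (β : List ℕ) : Set ℕ := {s | ∃ i, 0 < i ∧ i < β.length ∧ s = (β.take i).sum}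

/-- A sequencing of a finite vertex set `V`: a list enumerating `V` without repetition. -/
def IsSeq (V : Finset ℕ) (q : List ℕ) : Prop := q.Nodup ∧ q.toFinset = V

/-- `(q, β)` is an ordered path cover of the digraph `D` on vertex set `V`:
`q` is a sequencing of `V`, `β` is a composition of `|V|`, and every pair of
consecutive entries of `q` lying in the same block of `β` is a directed edge of `D`. -/
def IsOPC (V : Finset ℕ) (D : ℕ → ℕ → Prop) (q : List ℕ) (β : List ℕ) : Prop :=
  IsSeq V q ∧ IsComp q.length β ∧
    ∀ k, k + 1 < q.length → (k + 1) ∉ barSet β → D (q.getD k 0) (q.getD (k + 1) 0)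

/-- `asc q`: the number of pairs `{u,v}` with `u < v`, `v` appearing later in `q` than `u`,
such that either both `u→v` and `v→u` are edges of `D` or neither is. -/
def ascStat (D : ℕ → ℕ → Prop) (q : List ℕ) : ℕ :=
  ((q.toFinset ×ˢ q.toFinset).filter fun p =>
    p.1 < p.2 ∧ q.idxOf p.1 < q.idxOf p.2 ∧ (D p.1 p.2 ↔ D p.2 p.1)).card

/-- `des q`: the number of pairs `{u,v}` with `v < u`, `v` appearing later in `q` than `u`,
such that either both `u→v` and `v→u` are edges of `D` or neither is. -/
def desStat (D : ℕ → ℕ → Prop) (q : List ℕ) : ℕ :=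
  ((q.toFinset ×ˢ q.toFinset).filter fun p =>
    p.2 < p.1 ∧ q.idxOf p.1 < q.idxOf p.2 ∧ (D p.1 p.2 ↔ D p.2 p.1)).card

/-- The path quasisymmetric function `Ξ_D(x,t) = Σ_{(q,β)} t^{asc q} M_β`. -/
def Xi (V : Finset ℕ) (D : ℕ → ℕ → Prop) : MvPowerSeries ℕ (Polynomial ℤ) :=
  ∑ᶠ (q : List ℕ) (β : List ℕ),
    if IsOPC V D q β then
      (MvPowerSeries.C (σ := ℕ) (R := Polynomial ℤ)) (Polynomial.X ^ ascStat D q) * MQ β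
    else 0

/-- `asc κ` for a coloring: the number of edges `{u,v}` with `u < v` and `κ u < κ v`. -/
def ascColor (V : Finset ℕ) (A : ℕ → ℕ → Prop) (κ : ℕ → ℕ) : ℕ :=
  ((V ×ˢ V).filter fun p => A p.1 p.2 ∧ p.1 < p.2 ∧ κ p.1 < κ p.2).card

/-- A proper coloring of the graph with adjacency `A` on vertex set `V`, with colors the
positive integers (normalized to be `0` off `V`). -/
def IsProperColoring (V : Finset ℕ) (A : ℕ → ℕ → Prop) (κ : ℕ → ℕ) : Prop :=
  (∀ v, v ∉ V → κ v = 0) ∧ (∀ v ∈ V, 0 < κ v) ∧ ∀ u v, A u v → κ u ≠ κ v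

/-- The chromatic quasisymmetric function `X_G(x,t) = Σ_κ t^{asc κ} x_κ`, defined
coefficientwise: the coefficient of a monomial `d` is the sum of `t^{asc κ}` over all
proper colorings `κ` whose associated monomial is `d`. -/
def XG (V : Finset ℕ) (A : ℕ → ℕ → Prop) : MvPowerSeries ℕ (Polynomial ℤ) :=
  fun d => ∑ᶠ κ : ℕ → ℕ,
    if IsProperColoring V A κ ∧ (∑ v ∈ V, Finsupp.single (κ v) 1) = d
    then Polynomial.X ^ ascColor V A κ else 0

/-- The complement of a digraph `D` on vertex set `V`. -/
def Dcomp (V : Finset ℕ) (D : ℕ → ℕ → Prop) : ℕ → ℕ → Prop :=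
  fun u v => u ∈ V ∧ v ∈ V ∧ u ≠ v ∧ ¬ D u v

namespace CQAux

lemma mem_foldr_union (σ : List (Finset ℕ)) (v : ℕ) :
    v ∈ σ.foldr (· ∪ ·) ∅ ↔ ∃ S ∈ σ, v ∈ S := by
  induction σ with
  | nil => simp
  | cons S σ ih => simp [ih]

lemma mono_eval (V : Finset ℕ) (κ : ℕ → ℕ) (c : ℕ) :
    (∑ v ∈ V, Finsupp.single (κ v) (1:ℕ)) c = (V.filter fun v => κ v = c).card := by
  rw [Finset.sum_apply', Finset.card_filter]
  exact Finset.sum_congr rfl fun v _ => by simp [Finsupp.single_apply]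

lemma toFinset_ofFn {n : ℕ} (f : Fin n → ℕ) :
    (List.ofFn f).toFinset = Finset.image f Finset.univ := by
  ext a; simp [List.mem_ofFn, eq_comm]

lemma sort_image {n : ℕ} (f : Fin n → ℕ) (hf : StrictMono f) :
    (Finset.image f Finset.univ).sort (· ≤ ·) = List.ofFn f := by
  refine (fun h1 h2 => List.Perm.eq_of_sortedLE (Finset.pairwise_sort _ _).sortedLE h2 h1) ?_ ?_
  · refine List.perm_of_nodup_nodup_toFinset_eq (Finset.sort_nodup _ _)
      (List.nodup_ofFn.2 hf.injective) ?_
    rw [Finset.sort_toFinset, toFinset_ofFn]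
  · exact List.sortedLE_ofFn_iff.2 hf.monotone

def kap (d : ℕ →₀ ℕ) (σ : List (Finset ℕ)) (v : ℕ) : ℕ :=
  (d.support.sort (· ≤ ·)).getD (σ.findIdx fun S => v ∈ S) 0

section witness
variable {d : ℕ →₀ ℕ} {n : ℕ} {f : Fin n → ℕ} {α : Fin n → ℕ}

lemma witness_apply (hd : d = ∑ j, Finsupp.single (f j) (α j)) (hf : StrictMono f)
    (j : Fin n) : d (f j) = α j := by
  subst hd
  rw [Finset.sum_apply']
  have : ∀ i : Fin n, (Finsupp.single (f i) (α i) : ℕ →₀ ℕ) (f j)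
      = if i = j then α i else 0 := by
    intro i
    simp [Finsupp.single_apply, hf.injective.eq_iff]
  simp only [this, Finset.sum_ite_eq' Finset.univ j α, Finset.mem_univ, if_true]

lemma witness_support (hd : d = ∑ j, Finsupp.single (f j) (α j)) (hf : StrictMono f)
    (hα : ∀ j, 0 < α j) : d.support = Finset.image f Finset.univ := by
  apply Finset.Subset.antisymm
  · intro c hc
    have := Finsupp.support_finset_sum (s := Finset.univ)
      (f := fun j => Finsupp.single (f j) (α j)) (hd ▸ hc)
    simp only [Finset.mem_biUnion, Finset.mem_univ, true_and] at this
    obtain ⟨j, hj⟩ := this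
    have := Finsupp.support_single_subset hj
    simp only [Finset.mem_singleton] at this
    subst this
    exact Finset.mem_image_of_mem f (Finset.mem_univ j)
  · intro c hc
    simp only [Finset.mem_image, Finset.mem_univ, true_and] at hc
    obtain ⟨j, rfl⟩ := hc
    simp [Finsupp.mem_support_iff, witness_apply hd hf j, (hα j).ne']

lemma witness_sort (hd : d = ∑ j, Finsupp.single (f j) (α j)) (hf : StrictMono f)
    (hα : ∀ j, 0 < α j) : d.support.sort (· ≤ ·) = List.ofFn f := by
  rw [witness_support hd hf hα, sort_image f hf]

end witness

section part
variable {d : ℕ →₀ ℕ} {V : Finset ℕ} {σ : List (Finset ℕ)} {f : Fin σ.length → ℕ}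

lemma index_unique (hdisj : σ.Pairwise Disjoint) {i j : Fin σ.length} {v : ℕ}
    (hi : v ∈ σ.get i) (hj : v ∈ σ.get j) : i = j := by
  by_contra hne
  rcases lt_or_gt_of_ne hne with h | h
  · exact (Finset.disjoint_left.1 (List.pairwise_iff_get.1 hdisj i j h)) hi hj
  · exact (Finset.disjoint_left.1 (List.pairwise_iff_get.1 hdisj j i h)) hj hi

lemma mem_get_of_mem_V (hun : σ.foldr (· ∪ ·) ∅ = V) {v : ℕ} (hv : v ∈ V) :
    ∃ j : Fin σ.length, v ∈ σ.get j := by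
  rw [← hun, mem_foldr_union] at hv
  obtain ⟨S, hS, hvS⟩ := hv
  obtain ⟨j, rfl⟩ := List.mem_iff_get.1 hS
  exact ⟨j, hvS⟩

lemma mem_V_of_mem_get (hun : σ.foldr (· ∪ ·) ∅ = V) {v : ℕ} {j : Fin σ.length}
    (hv : v ∈ σ.get j) : v ∈ V :=
  hun ▸ (mem_foldr_union σ v).2 ⟨σ.get j, List.get_mem σ j, hv⟩

lemma kap_eq (hdisj : σ.Pairwise Disjoint)
    (hL : d.support.sort (· ≤ ·) = List.ofFn f)
    {j : Fin σ.length} {v : ℕ} (hv : v ∈ σ.get j) : kap d σ v = f j := by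
  have hidx : (σ.findIdx fun S => v ∈ S) = (j : ℕ) := by
    rw [List.findIdx_eq j.isLt]
    constructor
    · simpa using hv
    · intro i hij
      simp only [decide_eq_false_iff_not]
      intro hvi
      have := index_unique hdisj (i := ⟨i, lt_trans hij j.isLt⟩) (j := j) hvi hv
      simp only [Fin.ext_iff] at this
      omega
  have hlen : (d.support.sort (· ≤ ·)).length = σ.length := by
    rw [hL, List.length_ofFn]
  rw [kap, hidx, List.getD_eq_getElem _ _ (by omega : (j:ℕ) < (d.support.sort (· ≤ ·)).length)]
  have := List.getElem_ofFn (f := f) (i := (j : ℕ)) (by rw [List.length_ofFn]; exact j.isLt)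
  simp only [hL, this]

lemma kap_eq_zero (hun : σ.foldr (· ∪ ·) ∅ = V)
    (hlen : (d.support.sort (· ≤ ·)).length = σ.length)
    {v : ℕ} (hv : v ∉ V) : kap d σ v = 0 := by
  have hidx : (σ.findIdx fun S => v ∈ S) = σ.length := by
    rw [List.findIdx_eq_length]
    intro S hS
    simp only [decide_eq_false_iff_not]
    intro hvS
    exact hv (hun ▸ (mem_foldr_union σ v).2 ⟨S, hS, hvS⟩)
  rw [kap, hidx, List.getD_eq_default _ _ (le_of_eq hlen)]

lemma V_eq_biUnion (hun : σ.foldr (· ∪ ·) ∅ = V) :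
    V = Finset.univ.biUnion (fun j : Fin σ.length => σ.get j) := by
  ext v
  simp only [Finset.mem_biUnion, Finset.mem_univ, true_and]
  exact ⟨fun hv => mem_get_of_mem_V hun hv, fun ⟨j, hj⟩ => mem_V_of_mem_get hun hj⟩

lemma pairwiseDisjoint_get (hdisj : σ.Pairwise Disjoint) :
    (↑(Finset.univ : Finset (Fin σ.length)) : Set (Fin σ.length)).PairwiseDisjoint
      (fun j : Fin σ.length => σ.get j) := by
  intro i _ j _ hne
  rcases lt_or_gt_of_ne hne with h | h
  · exact List.pairwise_iff_get.1 hdisj i j h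
  · exact (List.pairwise_iff_get.1 hdisj j i h).symm

lemma mono_kap (hdisj : σ.Pairwise Disjoint) (hun : σ.foldr (· ∪ ·) ∅ = V)
    (hL : d.support.sort (· ≤ ·) = List.ofFn f)
    (hd : d = ∑ j, Finsupp.single (f j) (σ.get j).card) :
    (∑ v ∈ V, Finsupp.single (kap d σ v) 1) = d := by
  rw [V_eq_biUnion hun, Finset.sum_biUnion (pairwiseDisjoint_get hdisj)]
  have key : ∀ j : Fin σ.length, ∑ v ∈ σ.get j, Finsupp.single (kap d σ v) (1:ℕ)
      = Finsupp.single (f j) (σ.get j).card := by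
    intro j
    rw [Finset.sum_congr rfl (fun v hv => by rw [kap_eq hdisj hL hv]),
      Finset.sum_const, Finsupp.smul_single, smul_eq_mul, mul_one]
  rw [Finset.sum_congr rfl fun j _ => key j]
  exact hd.symm

end part

end CQAux

namespace CQAux2
open CQAux

section more
variable {d : ℕ →₀ ℕ} {V : Finset ℕ} {A : ℕ → ℕ → Prop} {σ : List (Finset ℕ)}
  {f : Fin σ.length → ℕ}

lemma kap_proper
    (hsupp : ∀ u v, A u v → u ∈ V ∧ v ∈ V)
    (hdisj : σ.Pairwise Disjoint) (hun : σ.foldr (· ∪ ·) ∅ = V)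
    (hstab : ∀ S ∈ σ, ∀ u ∈ S, ∀ v ∈ S, ¬ A u v)
    (hf : StrictMono f) (hfpos : ∀ j, 0 < f j)
    (hL : d.support.sort (· ≤ ·) = List.ofFn f) :
    IsProperColoring V A (kap d σ) := by
  refine ⟨fun v hv => kap_eq_zero hun (by rw [hL, List.length_ofFn]) hv, ?_, ?_⟩
  · intro v hv
    obtain ⟨j, hj⟩ := mem_get_of_mem_V hun hv
    rw [kap_eq hdisj hL hj]
    exact hfpos j
  · intro u v hA huv
    obtain ⟨hu, hv⟩ := hsupp u v hA
    obtain ⟨i, hi⟩ := mem_get_of_mem_V hun hu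
    obtain ⟨j, hj⟩ := mem_get_of_mem_V hun hv
    rw [kap_eq hdisj hL hi, kap_eq hdisj hL hj] at huv
    have hij : i = j := hf.injective huv
    subst hij
    exact hstab _ (List.get_mem σ i) u hi v hj hA

lemma asc_eq (hdisj : σ.Pairwise Disjoint) (hun : σ.foldr (· ∪ ·) ∅ = V)
    (hf : StrictMono f) (hL : d.support.sort (· ≤ ·) = List.ofFn f) :
    ascColor V A (kap d σ) =
      ((V ×ˢ V).filter fun p => A p.1 p.2 ∧ p.1 < p.2 ∧
        ∃ i j : Fin σ.length, i < j ∧ p.1 ∈ σ.get i ∧ p.2 ∈ σ.get j).card := by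
  unfold ascColor
  congr 1
  apply Finset.filter_congr
  intro p hp
  rw [Finset.mem_product] at hp
  obtain ⟨i0, hi0⟩ := mem_get_of_mem_V hun hp.1
  obtain ⟨j0, hj0⟩ := mem_get_of_mem_V hun hp.2
  have h1 : kap d σ p.1 = f i0 := kap_eq hdisj hL hi0
  have h2 : kap d σ p.2 = f j0 := kap_eq hdisj hL hj0
  refine and_congr_right fun _ => and_congr_right fun _ => ?_
  rw [h1, h2, hf.lt_iff_lt]
  constructor
  · intro h; exact ⟨i0, j0, h, hi0, hj0⟩
  · rintro ⟨i, j, hij, hi, hj⟩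
    rwa [index_unique hdisj hi hi0, index_unique hdisj hj hj0] at hij

lemma sort_getElem_eq {n : ℕ} {g : Fin n → ℕ}
    (hL : d.support.sort (· ≤ ·) = List.ofFn g) (j : Fin n) :
    (d.support.sort (· ≤ ·))[(j:ℕ)]'(by rw [hL, List.length_ofFn]; exact j.isLt) = g j := by
  simp only [hL, List.getElem_ofFn]

lemma kap_inj {σ' : List (Finset ℕ)} {f' : Fin σ'.length → ℕ}
    (hdisj : σ.Pairwise Disjoint) (hun : σ.foldr (· ∪ ·) ∅ = V)
    (hL : d.support.sort (· ≤ ·) = List.ofFn f)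
    (hdisj' : σ'.Pairwise Disjoint) (hun' : σ'.foldr (· ∪ ·) ∅ = V)
    (hL' : d.support.sort (· ≤ ·) = List.ofFn f')
    (hk : kap d σ = kap d σ') : σ = σ' := by
  have hlen : σ.length = σ'.length := by
    have h1 := congrArg List.length hL
    have h2 := congrArg List.length hL'
    rw [List.length_ofFn] at h1 h2
    omega
  have hlenL : (d.support.sort (· ≤ ·)).length = σ.length := by
    rw [hL, List.length_ofFn]
  apply List.ext_get hlen
  intro n h1 h2
  have key : ∀ (τ : List (Finset ℕ)) (g : Fin τ.length → ℕ)
      (hdisjτ : τ.Pairwise Disjoint) (hunτ : τ.foldr (· ∪ ·) ∅ = V)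
      (hLτ : d.support.sort (· ≤ ·) = List.ofFn g) (hn : n < τ.length) (v : ℕ),
      v ∈ τ.get ⟨n, hn⟩ ↔ v ∈ V ∧ kap d τ v =
        (d.support.sort (· ≤ ·))[n]'(by rw [hLτ, List.length_ofFn]; exact hn) := by
    intro τ g hdisjτ hunτ hLτ hn v
    constructor
    · intro hv
      refine ⟨mem_V_of_mem_get hunτ hv, ?_⟩
      rw [kap_eq hdisjτ hLτ hv, ← sort_getElem_eq hLτ ⟨n, hn⟩]
    · rintro ⟨hvV, hkv⟩
      obtain ⟨j, hj⟩ := mem_get_of_mem_V hunτ hvV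
      have : kap d τ v = g j := kap_eq hdisjτ hLτ hj
      rw [this, ← sort_getElem_eq hLτ j] at hkv
      have hnd := Finset.sort_nodup d.support (· ≤ ·)
      have : (j : ℕ) = n := by
        have := List.nodup_iff_injective_get.1 hnd
          (show (d.support.sort (· ≤ ·)).get ⟨(j:ℕ), _⟩
            = (d.support.sort (· ≤ ·)).get ⟨n, by rw [hLτ, List.length_ofFn]; exact hn⟩
            from hkv)
        exact congrArg Fin.val this
      have : j = ⟨n, hn⟩ := Fin.ext this
      rwa [this] at hj
  ext v
  rw [key σ f hdisj hun hL h1 v, key σ' f' hdisj' hun' hL' h2 v, hk]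

end more
end CQAux2

namespace CQAux3
open CQAux CQAux2

variable {d : ℕ →₀ ℕ} {V : Finset ℕ} {A : ℕ → ℕ → Prop} {κ : ℕ → ℕ}

/-- the ordered partition into color classes -/
def bupart (d : ℕ →₀ ℕ) (V : Finset ℕ) (κ : ℕ → ℕ) : List (Finset ℕ) :=
  (d.support.sort (· ≤ ·)).map (fun c => V.filter fun v => κ v = c)

lemma coeff_eq_card (hm : (∑ v ∈ V, Finsupp.single (κ v) 1) = d) (c : ℕ) :
    d c = (V.filter fun v => κ v = c).card := by
  rw [← hm]; exact mono_eval V κ c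

lemma mem_support_iff_exists (hm : (∑ v ∈ V, Finsupp.single (κ v) 1) = d) (c : ℕ) :
    c ∈ d.support ↔ ∃ v ∈ V, κ v = c := by
  rw [Finsupp.mem_support_iff, ne_eq, coeff_eq_card hm, ← ne_eq, Finset.card_ne_zero]
  constructor
  · rintro ⟨v, hv⟩
    rw [Finset.mem_filter] at hv
    exact ⟨v, hv.1, hv.2⟩
  · rintro ⟨v, hv1, hv2⟩
    exact ⟨v, Finset.mem_filter.2 ⟨hv1, hv2⟩⟩

lemma bu_length : (bupart d V κ).length = (d.support.sort (· ≤ ·)).length :=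
  List.length_map _

/-- the canonical strictly monotone witness -/
def buf (d : ℕ →₀ ℕ) (V : Finset ℕ) (κ : ℕ → ℕ) : Fin (bupart d V κ).length → ℕ :=
  fun j => (d.support.sort (· ≤ ·)).get (Fin.cast bu_length j)

lemma buf_strictMono : StrictMono (buf d V κ) := by
  intro i j hij
  exact (Finset.sortedLT_sort d.support).strictMono_get hij

lemma sort_eq_ofFn_buf : d.support.sort (· ≤ ·) = List.ofFn (buf d V κ) := by
  apply List.ext_get (by rw [List.length_ofFn, bu_length])
  intro n h1 h2
  rw [List.get_ofFn]
  rfl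

lemma bu_get (j : Fin (bupart d V κ).length) :
    (bupart d V κ).get j = V.filter (fun v => κ v = buf d V κ j) := by
  simp only [bupart, buf, List.get_eq_getElem, List.getElem_map]
  exact List.getElem_map _

lemma bu_nonempty (hm : (∑ v ∈ V, Finsupp.single (κ v) 1) = d) :
    ∀ S ∈ bupart d V κ, S.Nonempty := by
  intro S hS
  rw [bupart, List.mem_map] at hS
  obtain ⟨c, hc, rfl⟩ := hS
  rw [Finset.mem_sort] at hc
  obtain ⟨v, hv1, hv2⟩ := (mem_support_iff_exists hm c).1 hc
  exact ⟨v, Finset.mem_filter.2 ⟨hv1, hv2⟩⟩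

lemma bu_disjoint : (bupart d V κ).Pairwise Disjoint := by
  rw [bupart, List.pairwise_map]
  refine List.Pairwise.imp_of_mem ?_
    ((Finset.sort_nodup d.support (· ≤ ·)) : List.Pairwise (· ≠ ·) _)
  intro c c' _ _ hne
  rw [Finset.disjoint_left]
  intro v hv hv'
  rw [Finset.mem_filter] at hv hv'
  exact hne (hv.2 ▸ hv'.2 ▸ rfl)

lemma bu_union (hm : (∑ v ∈ V, Finsupp.single (κ v) 1) = d) :
    (bupart d V κ).foldr (· ∪ ·) ∅ = V := by
  ext v
  rw [mem_foldr_union]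
  constructor
  · rintro ⟨S, hS, hvS⟩
    rw [bupart, List.mem_map] at hS
    obtain ⟨c, _, rfl⟩ := hS
    exact (Finset.mem_filter.1 hvS).1
  · intro hv
    refine ⟨V.filter fun w => κ w = κ v, ?_, Finset.mem_filter.2 ⟨hv, rfl⟩⟩
    rw [bupart, List.mem_map]
    exact ⟨κ v, (Finset.mem_sort _).2 ((mem_support_iff_exists hm (κ v)).2 ⟨v, hv, rfl⟩),
      rfl⟩

lemma bu_stable (hproper : ∀ u v, A u v → κ u ≠ κ v) :
    ∀ S ∈ bupart d V κ, ∀ u ∈ S, ∀ v ∈ S, ¬ A u v := by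
  intro S hS u hu v hv hA
  rw [bupart, List.mem_map] at hS
  obtain ⟨c, _, rfl⟩ := hS
  rw [Finset.mem_filter] at hu hv
  exact hproper u v hA (hu.2.trans hv.2.symm)

lemma buf_pos (hm : (∑ v ∈ V, Finsupp.single (κ v) 1) = d)
    (hpos : ∀ v ∈ V, 0 < κ v) (j : Fin (bupart d V κ).length) : 0 < buf d V κ j := by
  have hmem : buf d V κ j ∈ d.support.sort (· ≤ ·) := List.get_mem _ _
  rw [Finset.mem_sort] at hmem
  obtain ⟨v, hv1, hv2⟩ := (mem_support_iff_exists hm _).1 hmem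
  exact hv2 ▸ hpos v hv1

lemma bu_sum (hm : (∑ v ∈ V, Finsupp.single (κ v) 1) = d) :
    d = ∑ j, Finsupp.single (buf d V κ j) ((bupart d V κ).get j).card := by
  ext c
  rw [Finset.sum_apply']
  have hterm : ∀ j, (Finsupp.single (buf d V κ j) ((bupart d V κ).get j).card : ℕ →₀ ℕ) c
      = if buf d V κ j = c then d c else 0 := by
    intro j
    rw [Finsupp.single_apply]
    split
    · next h => rw [bu_get, ← h, ← coeff_eq_card hm]
    · rfl
  simp only [hterm]
  by_cases hc : c ∈ d.support
  · have : c ∈ d.support.sort (· ≤ ·) := (Finset.mem_sort _).2 hc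
    obtain ⟨k, hk⟩ := List.mem_iff_get.1 this
    rw [Finset.sum_eq_single (Fin.cast bu_length.symm k)]
    · rw [if_pos]; exact hk ▸ rfl
    · intro j _ hj
      rw [if_neg]
      intro hj2
      apply hj
      have := List.nodup_iff_injective_get.1 (Finset.sort_nodup d.support (· ≤ ·))
        (show (d.support.sort (· ≤ ·)).get (Fin.cast bu_length j) = _ from hj2.trans hk.symm)
      rw [← this]
      rfl
    · intro h; exact absurd (Finset.mem_univ _) h
  · rw [Finsupp.notMem_support_iff.1 hc]
    simp

lemma kap_bu (hm : (∑ v ∈ V, Finsupp.single (κ v) 1) = d)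
    (hzero : ∀ v, v ∉ V → κ v = 0) : kap d (bupart d V κ) = κ := by
  funext v
  by_cases hv : v ∈ V
  · have hsup : κ v ∈ d.support := (mem_support_iff_exists hm (κ v)).2 ⟨v, hv, rfl⟩
    have : κ v ∈ d.support.sort (· ≤ ·) := (Finset.mem_sort _).2 hsup
    obtain ⟨k, hk⟩ := List.mem_iff_get.1 this
    have hvmem : v ∈ (bupart d V κ).get (Fin.cast bu_length.symm k) := by
      rw [bu_get]
      refine Finset.mem_filter.2 ⟨hv, ?_⟩
      rw [← hk]
      rfl
    rw [kap_eq bu_disjoint sort_eq_ofFn_buf hvmem]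
    rw [← hk]
    rfl
  · rw [kap_eq_zero (bu_union hm) (bu_length.symm) hv, hzero v hv]

end CQAux3

namespace CQAux4
open CQAux CQAux2 CQAux3

lemma part_finite (V : Finset ℕ) :
    {σ : List (Finset ℕ) | (∀ S ∈ σ, S.Nonempty) ∧ σ.Pairwise Disjoint ∧
      σ.foldr (· ∪ ·) ∅ = V}.Finite := by
  classical
  have h1 : {l : List ↥V.powerset | l.length ≤ 2 ^ V.card}.Finite :=
    List.finite_length_le _ _
  apply Set.Finite.subset (h1.image (List.map Subtype.val))
  rintro σ ⟨hne, hdisj, hun⟩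
  have hsub : ∀ S ∈ σ, S ∈ V.powerset := by
    intro S hS
    rw [Finset.mem_powerset]
    intro v hv
    exact hun ▸ (mem_foldr_union σ v).2 ⟨S, hS, hv⟩
  have hnd : σ.Nodup := by
    refine List.Pairwise.imp_of_mem ?_ hdisj
    intro S T hS _ hd hST
    subst hST
    obtain ⟨v, hv⟩ := hne S hS
    exact Finset.disjoint_left.1 hd hv hv
  refine ⟨σ.attach.map (fun x => (⟨x.1, hsub x.1 x.2⟩ : ↥V.powerset)), ?_, ?_⟩
  · simp only [Set.mem_setOf_eq, List.length_map, List.length_attach]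
    calc σ.length = σ.toFinset.card := (List.toFinset_card_of_nodup hnd).symm
      _ ≤ V.powerset.card :=
        Finset.card_le_card (fun S hS => hsub S (List.mem_toFinset.1 hS))
      _ = 2 ^ V.card := Finset.card_powerset V
  · rw [List.map_map]
    exact List.attach_map_subtype_val σ

def EW (d : ℕ →₀ ℕ) (σ : List (Finset ℕ)) : Prop :=
  ∃ f : Fin σ.length → ℕ, StrictMono f ∧ (∀ j, 0 < f j) ∧
    d = ∑ j, Finsupp.single (f j) (σ.get j).card

lemma MQ_coeff (d : ℕ →₀ ℕ) (σ : List (Finset ℕ)) :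
    MQ (σ.map Finset.card) d = if EW d σ then 1 else 0 := by
  rw [MQ]
  refine if_congr ?_ rfl rfl
  have hlen : σ.length = (σ.map Finset.card).length := (List.length_map _).symm
  constructor
  · rintro ⟨f, hf, hpos, hsum⟩
    refine ⟨fun j => f (Fin.cast hlen j), ?_, fun j => hpos _, ?_⟩
    · intro a b hab
      exact hf (show (a : ℕ) < (b : ℕ) from hab)
    · rw [hsum, ← Fin.sum_congr' (fun j => Finsupp.single (f j)
        ((σ.map Finset.card).get j)) hlen]
      refine Finset.sum_congr rfl fun j _ => ?_
      congr 1
      simp [List.get_eq_getElem, List.getElem_map]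
  · rintro ⟨g, hg, hpos, hsum⟩
    refine ⟨fun j => g (Fin.cast hlen.symm j), ?_, fun j => hpos _, ?_⟩
    · intro a b hab
      exact hg (show (a : ℕ) < (b : ℕ) from hab)
    · rw [hsum, ← Fin.sum_congr' (fun j => Finsupp.single (g j) ((σ.get j)).card)
        hlen.symm]
      refine Finset.sum_congr rfl fun j _ => ?_
      congr 1
      simp [List.get_eq_getElem, List.getElem_map]

end CQAux4


/-- Shareshian–Wachs expansion of the chromatic quasisymmetric function:
for a graph `G` on a finite vertex set `V` of positive integers,
`X_G(x,t) = Σ_σ t^{asc σ} M_{(|σ_1|,…,|σ_ℓ|)}`, summed over all ordered partitions `σ`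
of `V` into nonempty stable sets, where `asc σ` counts edges `{u,v}` of `G` with `u < v`
and `v` lying in a strictly later part of `σ` than `u`. -/
theorem chromatic_qsym_eq_sum_stable_ordered_partitions
    (V : Finset ℕ) (hV : ∀ v ∈ V, 0 < v) (A : ℕ → ℕ → Prop)
    (hsymm : ∀ u v, A u v → A v u) (hirr : ∀ u, ¬ A u u)
    (hsupp : ∀ u v, A u v → u ∈ V ∧ v ∈ V) :
    XG V A = ∑ᶠ σ : List (Finset ℕ),
      if (∀ S ∈ σ, S.Nonempty) ∧ σ.Pairwise Disjoint ∧ σ.foldr (· ∪ ·) ∅ = V ∧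
          (∀ S ∈ σ, ∀ u ∈ S, ∀ v ∈ S, ¬ A u v) then
        (MvPowerSeries.C (σ := ℕ) (R := Polynomial ℤ))
            (Polynomial.X ^ ((V ×ˢ V).filter fun p => A p.1 p.2 ∧ p.1 < p.2 ∧
              ∃ i j : Fin σ.length, i < j ∧ p.1 ∈ σ.get i ∧ p.2 ∈ σ.get j).card) *
          MQ (σ.map Finset.card)
      else 0 := by
  classical
  open CQAux CQAux2 CQAux3 CQAux4 in
  -- the ascent statistic of an ordered partition
  set aexp : List (Finset ℕ) → ℕ := fun σ =>
    ((V ×ˢ V).filter fun p => A p.1 p.2 ∧ p.1 < p.2 ∧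
      ∃ i j : Fin σ.length, i < j ∧ p.1 ∈ σ.get i ∧ p.2 ∈ σ.get j).card with haexp
  have hfinset : ∀ σ : List (Finset ℕ),
      ((∀ S ∈ σ, S.Nonempty) ∧ σ.Pairwise Disjoint ∧ σ.foldr (· ∪ ·) ∅ = V) →
        σ ∈ (CQAux4.part_finite V).toFinset :=
    fun σ h => (CQAux4.part_finite V).mem_toFinset.2 h
  rw [finsum_eq_finset_sum_of_support_subset _ (s := (CQAux4.part_finite V).toFinset) ?_]
  swap
  · intro σ hσ
    simp only [Function.mem_support, ne_eq] at hσ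
    by_cases hC : (∀ S ∈ σ, S.Nonempty) ∧ σ.Pairwise Disjoint ∧
        σ.foldr (· ∪ ·) ∅ = V ∧ (∀ S ∈ σ, ∀ u ∈ S, ∀ v ∈ S, ¬ A u v)
    · exact hfinset σ ⟨hC.1, hC.2.1, hC.2.2.1⟩
    · exact absurd (if_neg hC) hσ
  funext d
  rw [show ∀ (s : Finset (List (Finset ℕ))) (g : List (Finset ℕ) → MvPowerSeries ℕ (Polynomial ℤ)),
      (∑ i ∈ s, g i) d = ∑ i ∈ s, g i d from fun s g => Finset.sum_apply d s g]
  -- the two index sets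
  set T : Set (ℕ → ℕ) := {κ | IsProperColoring V A κ ∧
    (∑ v ∈ V, Finsupp.single (κ v) 1) = d} with hT
  set S : Set (List (Finset ℕ)) := {σ | ((∀ S ∈ σ, S.Nonempty) ∧ σ.Pairwise Disjoint ∧
    σ.foldr (· ∪ ·) ∅ = V ∧ (∀ S ∈ σ, ∀ u ∈ S, ∀ v ∈ S, ¬ A u v)) ∧ CQAux4.EW d σ}
    with hS
  -- rewrite each σ-term as an indicator
  have hterm : ∀ σ : List (Finset ℕ),
      ((if (∀ S ∈ σ, S.Nonempty) ∧ σ.Pairwise Disjoint ∧ σ.foldr (· ∪ ·) ∅ = V ∧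
          (∀ S ∈ σ, ∀ u ∈ S, ∀ v ∈ S, ¬ A u v) then
        (MvPowerSeries.C (σ := ℕ) (R := Polynomial ℤ)) (Polynomial.X ^ aexp σ) *
          MQ (σ.map Finset.card)
      else 0) d)
      = Set.indicator S (fun σ => (Polynomial.X : Polynomial ℤ) ^ aexp σ) σ := by
    intro σ
    by_cases hC : (∀ S ∈ σ, S.Nonempty) ∧ σ.Pairwise Disjoint ∧
        σ.foldr (· ∪ ·) ∅ = V ∧ (∀ S ∈ σ, ∀ u ∈ S, ∀ v ∈ S, ¬ A u v)
    · rw [if_pos hC]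
      have h1 : ((MvPowerSeries.C (σ := ℕ) (R := Polynomial ℤ)) (Polynomial.X ^ aexp σ) *
          MQ (σ.map Finset.card)) d
          = Polynomial.X ^ aexp σ * MQ (σ.map Finset.card) d :=
        MvPowerSeries.coeff_C_mul d (MQ (σ.map Finset.card)) (Polynomial.X ^ aexp σ)
      rw [h1, CQAux4.MQ_coeff d σ]
      by_cases hE : CQAux4.EW d σ
      · rw [if_pos hE, mul_one, Set.indicator_of_mem (show σ ∈ S from ⟨hC, hE⟩)]
      · rw [if_neg hE, mul_zero, Set.indicator_of_notMem
          (show σ ∉ S from fun h => hE h.2)]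
    · rw [if_neg hC]
      rw [Set.indicator_of_notMem (show σ ∉ S from fun h => hC h.1)]
      rfl
  rw [Finset.sum_congr rfl fun σ _ => hterm σ]
  rw [← finsum_eq_finset_sum_of_support_subset _ (s := (CQAux4.part_finite V).toFinset)
    (fun σ hσ => hfinset σ (by
      have h1 : σ ∈ S := by
        by_contra h
        exact hσ (Set.indicator_of_notMem h _)
      exact ⟨h1.1.1, h1.1.2.1, h1.1.2.2.1⟩))]
  rw [← finsum_mem_def S (fun σ => (Polynomial.X : Polynomial ℤ) ^ aexp σ)]
  -- left-hand side
  have hXG : XG V A d = ∑ᶠ κ : ℕ → ℕ,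
      Set.indicator T (fun κ => (Polynomial.X : Polynomial ℤ) ^ ascColor V A κ) κ := by
    rw [XG]
    apply finsum_congr
    intro κ
    by_cases hκ : IsProperColoring V A κ ∧ (∑ v ∈ V, Finsupp.single (κ v) 1) = d
    · rw [if_pos hκ, Set.indicator_of_mem (show κ ∈ T from hκ)]
    · rw [if_neg hκ, Set.indicator_of_notMem (show κ ∉ T from hκ)]
  rw [hXG, ← finsum_mem_def T (fun κ => (Polynomial.X : Polynomial ℤ) ^ ascColor V A κ)]
  -- the bijection σ ↦ kap d σ
  refine (finsum_mem_eq_of_bijOn (CQAux.kap d) ⟨?_, ?_, ?_⟩ ?_).symm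
  · -- MapsTo
    rintro σ ⟨⟨hne, hdisj, hun, hstab⟩, f, hf, hpos, hsum⟩
    have hL : d.support.sort (· ≤ ·) = List.ofFn f :=
      CQAux.witness_sort hsum hf
        (fun j => (hne (σ.get j) (List.get_mem σ j)).card_pos)
    exact ⟨CQAux2.kap_proper hsupp hdisj hun hstab hf hpos hL,
      CQAux.mono_kap hdisj hun hL hsum⟩
  · -- InjOn
    rintro σ ⟨⟨hne, hdisj, hun, hstab⟩, f, hf, hpos, hsum⟩
      σ' ⟨⟨hne', hdisj', hun', hstab'⟩, f', hf', hpos', hsum'⟩ hk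
    have hL : d.support.sort (· ≤ ·) = List.ofFn f :=
      CQAux.witness_sort hsum hf
        (fun j => (hne (σ.get j) (List.get_mem σ j)).card_pos)
    have hL' : d.support.sort (· ≤ ·) = List.ofFn f' :=
      CQAux.witness_sort hsum' hf'
        (fun j => (hne' (σ'.get j) (List.get_mem σ' j)).card_pos)
    exact CQAux2.kap_inj hdisj hun hL hdisj' hun' hL' hk
  · -- SurjOn
    rintro κ ⟨hproper, hm⟩
    refine ⟨CQAux3.bupart d V κ, ⟨⟨CQAux3.bu_nonempty hm, CQAux3.bu_disjoint,
      CQAux3.bu_union hm, CQAux3.bu_stable hproper.2.2⟩,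
      CQAux3.buf d V κ, CQAux3.buf_strictMono, CQAux3.buf_pos hm hproper.2.1,
      CQAux3.bu_sum hm⟩, CQAux3.kap_bu hm hproper.1⟩
  · -- values agree
    rintro σ ⟨⟨hne, hdisj, hun, hstab⟩, f, hf, hpos, hsum⟩
    have hL : d.support.sort (· ≤ ·) = List.ofFn f :=
      CQAux.witness_sort hsum hf
        (fun j => (hne (σ.get j) (List.get_mem σ j)).card_pos)
    exact congrArg (fun n => (Polynomial.X : Polynomial ℤ) ^ n)
      (CQAux2.asc_eq hdisj hun hf hL).symm


end
end

section
/- Let m be a Hessenberg function of length n (with m_n = n), let λ be a partition of n, and let T be an admissible tableau of shape λ for m. Then the Tymoczko statistic dim(T) equals the number of ordered pairs (i,k) of entries of T such that (i lies in the same row as k and strictly to the left of k, or i lies in a strictly lower row than k) and k < i ≤ m_k. -/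
open scoped Classical
open Finset

noncomputable section

/-- `m` is a Hessenberg function of length `n` (with the convention `m n = n`):
`m_1 ≤ ⋯ ≤ m_{n-1} ≤ n` and `i ≤ m_i` for all `i`. -/
def IsHess (n : ℕ) (m : ℕ → ℕ) : Prop :=
  (∀ i, 1 ≤ i → i ≤ n - 1 → i ≤ m i ∧ m i ≤ n) ∧
  (∀ i j, 1 ≤ i → i ≤ j → j ≤ n - 1 → m i ≤ m j) ∧ m n = n

/-- The digraph `D(m)` on `[n] = {1,…,n}`: edge `u → v` iff `v ≺ u` in the natural unit
interval order `P(m)`, i.e. iff `u > m v`. -/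
def Dm (n : ℕ) (m : ℕ → ℕ) : ℕ → ℕ → Prop :=
  fun u v => u ∈ Finset.Icc 1 n ∧ v ∈ Finset.Icc 1 n ∧ m v < u

/-- The incomparability graph `G(m)` on `[n]`: for `u < v`, `u` and `v` are adjacent
iff `v ≤ m u`. -/
def Gm (n : ℕ) (m : ℕ → ℕ) : ℕ → ℕ → Prop :=
  fun u v => u ∈ Finset.Icc 1 n ∧ v ∈ Finset.Icc 1 n ∧
    ((u < v ∧ v ≤ m u) ∨ (v < u ∧ u ≤ m v))

/-- `l` is a partition of `n`: a weakly decreasing list of positive integers summing to `n`. -/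
def IsPartitionOf (n : ℕ) (l : List ℕ) : Prop :=
  l.Pairwise (· ≥ ·) ∧ (∀ a ∈ l, 0 < a) ∧ l.sum = n

/-- The boxes of the Young diagram of `l`, as pairs `(row, column)` (`0`-indexed,
rows numbered from the top). -/
def YBoxes (l : List ℕ) : Finset (ℕ × ℕ) :=
  (Finset.range l.length ×ˢ Finset.range l.sum).filter fun p => p.2 < l.getD p.1 0

/-- A tableau of shape `l`: a bijective filling of the boxes of the Young diagram of `l`
with the numbers `1,…,n` (normalized to be `0` off the diagram). -/
def IsTableau (n : ℕ) (l : List ℕ) (T : ℕ × ℕ → ℕ) : Prop :=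
  (∀ p, p ∉ YBoxes l → T p = 0) ∧ Set.BijOn T (YBoxes l) (Finset.Icc 1 n)

/-- `T` is admissible for `m`: whenever an entry `k` occupies the box immediately to the
left of an entry `j` in a row, then `k ≤ m j`. -/
def Admissible (m : ℕ → ℕ) (l : List ℕ) (T : ℕ × ℕ → ℕ) : Prop :=
  ∀ r c, (r, c) ∈ YBoxes l → (r, c + 1) ∈ YBoxes l → T (r, c) ≤ m (T (r, c + 1))

/-- The Tymoczko statistic `dim T`: the number of ordered pairs `(i,k)` of entries
(`i = T pp.1`, `k = T pp.2`) such that EITHER `i` and `k` are in the same row with `i`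
to the left of `k`, `k < i`, and if some entry `j` occupies the box immediately to the
right of `k` then `i ≤ m j`; OR `i` is in a strictly lower row than `k` and `k < i ≤ m k`. -/
def dimT (m : ℕ → ℕ) (l : List ℕ) (T : ℕ × ℕ → ℕ) : ℕ :=
  ((YBoxes l ×ˢ YBoxes l).filter fun pp =>
    (pp.1.1 = pp.2.1 ∧ pp.1.2 < pp.2.2 ∧ T pp.2 < T pp.1 ∧
      ((pp.2.1, pp.2.2 + 1) ∈ YBoxes l → T pp.1 ≤ m (T (pp.2.1, pp.2.2 + 1)))) ∨
    (pp.2.1 < pp.1.1 ∧ T pp.2 < T pp.1 ∧ T pp.1 ≤ m (T pp.2))).card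

private lemma telescope_key (a b : ℕ) (u v : ℕ → Prop) [DecidablePred u] [DecidablePred v]
    (hua : a < b → u a) (hub : u b)
    (htr : ∀ c, a ≤ c → c < b → ¬(u c ↔ u (c + 1)) → v c) :
    ∑ c ∈ Finset.Ico a b, (if v c ∧ u (c + 1) then 1 else 0 : ℕ)
      = ∑ c ∈ Finset.Ico a b, (if v c ∧ u c then 1 else 0 : ℕ) := by
  rcases le_or_gt b a with h | h
  · rw [Finset.Ico_eq_empty (not_lt.mpr h)]
    simp
  · have key : ∀ c ∈ Finset.Ico a b,
        ((if v c ∧ u (c + 1) then 1 else 0 : ℤ) - (if v c ∧ u c then 1 else 0))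
          = (if u (c + 1) then 1 else 0) - (if u c then 1 else 0) := by
      intro c hc
      rw [Finset.mem_Ico] at hc
      by_cases hiff : u c ↔ u (c + 1)
      · by_cases huc : u c
        · have h1 : u (c + 1) := hiff.mp huc
          by_cases hv : v c <;> simp [hv, huc, h1]
        · have h1 : ¬u (c + 1) := fun h' => huc (hiff.mpr h')
          by_cases hv : v c <;> simp [hv, huc, h1]
      · have hv := htr c hc.1 hc.2 hiff
        by_cases huc : u c <;> by_cases huc1 : u (c + 1) <;> simp [hv, huc, huc1]
    have h1 : (∑ c ∈ Finset.Ico a b, ((if v c ∧ u (c + 1) then 1 else 0 : ℤ)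
          - (if v c ∧ u c then 1 else 0)))
        = ∑ c ∈ Finset.Ico a b, ((if u (c + 1) then 1 else 0 : ℤ) - (if u c then 1 else 0)) :=
      Finset.sum_congr rfl key
    have h2 : (∑ c ∈ Finset.Ico a b, ((if u (c + 1) then 1 else 0 : ℤ) - (if u c then 1 else 0)))
        = (if u b then 1 else 0) - (if u a then 1 else 0) := by
      rw [Finset.sum_Ico_eq_sum_range]
      have h3 := Finset.sum_range_sub (fun k => (if u (a + k) then 1 else 0 : ℤ)) (b - a)
      have h4 : a + (b - a) = b := Nat.add_sub_cancel' h.le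
      simp only [Nat.add_zero, h4] at h3
      rw [← h3]
      exact Finset.sum_congr rfl fun i _ => by rw [Nat.add_assoc]
    rw [Finset.sum_sub_distrib] at h1
    rw [if_pos hub, if_pos (hua h), sub_self] at h2
    have h6 := h1.trans h2
    have h5 : (∑ c ∈ Finset.Ico a b, (if v c ∧ u (c + 1) then 1 else 0 : ℤ))
        = ∑ c ∈ Finset.Ico a b, (if v c ∧ u c then 1 else 0 : ℤ) := by linarith
    exact_mod_cast h5

private lemma mem_YBoxes {l : List ℕ} {r c : ℕ} :
    (r, c) ∈ YBoxes l ↔ r < l.length ∧ c < l.sum ∧ c < l.getD r 0 := by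
  simp [YBoxes, Finset.mem_filter, Finset.mem_product, Finset.mem_range, and_assoc]

private lemma getD_le_sum {l : List ℕ} {r : ℕ} (h : r < l.length) : l.getD r 0 ≤ l.sum := by
  rw [List.getD_eq_getElem l 0 h]
  exact List.single_le_sum (fun x _ => Nat.zero_le x) _ (List.getElem_mem h)

private lemma mem_row {l : List ℕ} {r c : ℕ} (h : r < l.length) :
    (r, c) ∈ YBoxes l ↔ c < l.getD r 0 := by
  rw [mem_YBoxes]
  exact ⟨fun h' => h'.2.2, fun h' => ⟨h, lt_of_lt_of_le h' (getD_le_sum h), h'⟩⟩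

private lemma self_le_m {n : ℕ} {m : ℕ → ℕ} (hm : IsHess n m) {x : ℕ}
    (h1 : 1 ≤ x) (h2 : x ≤ n) : x ≤ m x := by
  rcases eq_or_lt_of_le h2 with rfl | hlt
  · exact hm.2.2.ge
  · exact (hm.1 x h1 (Nat.le_pred_of_lt hlt)).1

private lemma sum_row_eq {l : List ℕ} {r c : ℕ} (hb1 : (r, c) ∈ YBoxes l)
    (C : ℕ × ℕ → Prop) [DecidablePred C] :
    ∑ b2 ∈ YBoxes l, (if b2.1 = r ∧ c < b2.2 ∧ C b2 then 1 else 0 : ℕ)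
      = ∑ c' ∈ Finset.Ico (c + 1) (l.getD r 0), (if C (r, c') then 1 else 0) := by
  have hr : r < l.length := (mem_YBoxes.mp hb1).1
  have hset : (YBoxes l).filter (fun b2 => b2.1 = r ∧ c < b2.2 ∧ C b2)
      = ({r} ×ˢ Finset.Ico (c + 1) (l.getD r 0)).filter (fun b2 => C b2) := by
    ext ⟨r', c'⟩
    simp only [Finset.mem_filter, Finset.mem_product, Finset.mem_singleton, Finset.mem_Ico,
      mem_YBoxes]
    constructor
    · rintro ⟨⟨h1, h2, h3⟩, rfl, h5, h6⟩
      exact ⟨⟨rfl, h5, h3⟩, h6⟩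
    · rintro ⟨⟨rfl, h5, h3⟩, h6⟩
      exact ⟨⟨hr, lt_of_lt_of_le h3 (getD_le_sum hr), h3⟩, rfl, h5, h6⟩
  calc ∑ b2 ∈ YBoxes l, (if b2.1 = r ∧ c < b2.2 ∧ C b2 then 1 else 0 : ℕ)
      = ((YBoxes l).filter fun b2 => b2.1 = r ∧ c < b2.2 ∧ C b2).card :=
        (Finset.card_filter _ _).symm
    _ = (({r} ×ˢ Finset.Ico (c + 1) (l.getD r 0)).filter fun b2 => C b2).card := by rw [hset]
    _ = ∑ b2 ∈ ({r} ×ˢ Finset.Ico (c + 1) (l.getD r 0)), (if C b2 then 1 else 0 : ℕ) :=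
        Finset.card_filter _ _
    _ = ∑ c' ∈ Finset.Ico (c + 1) (l.getD r 0), (if C (r, c') then 1 else 0) := by
        rw [Finset.sum_product, Finset.sum_singleton]

private lemma row_count {n : ℕ} {m : ℕ → ℕ} (hm : IsHess n m) {l : List ℕ}
    {T : ℕ × ℕ → ℕ} (hT : IsTableau n l T) (hadm : Admissible m l T)
    {r c : ℕ} (hb1 : (r, c) ∈ YBoxes l) :
    ∑ b2 ∈ YBoxes l, (if b2.1 = r ∧ c < b2.2 ∧ T b2 < T (r, c) ∧
        ((b2.1, b2.2 + 1) ∈ YBoxes l → T (r, c) ≤ m (T (b2.1, b2.2 + 1))) then 1 else 0 : ℕ)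
      = ∑ b2 ∈ YBoxes l, (if b2.1 = r ∧ c < b2.2 ∧ T b2 < T (r, c) ∧ T (r, c) ≤ m (T b2)
          then 1 else 0) := by
  have hr : r < l.length := (mem_YBoxes.mp hb1).1
  have hself : ∀ p ∈ YBoxes l, T p ≤ m (T p) := by
    intro p hp
    have hmem : T p ∈ (Finset.Icc 1 n : Finset ℕ) := by
      have := hT.2.mapsTo (by exact_mod_cast hp : p ∈ (↑(YBoxes l) : Set (ℕ × ℕ)))
      exact_mod_cast this
    rw [Finset.mem_Icc] at hmem
    exact self_le_m hm hmem.1 hmem.2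
  refine ((sum_row_eq hb1 fun b2 => T b2 < T (r, c) ∧
      ((b2.1, b2.2 + 1) ∈ YBoxes l → T (r, c) ≤ m (T (b2.1, b2.2 + 1)))).trans ?_).trans
    (sum_row_eq hb1 fun b2 => T b2 < T (r, c) ∧ T (r, c) ≤ m (T b2)).symm
  have hA : ∀ c' ∈ Finset.Ico (c + 1) (l.getD r 0),
      (if T (r, c') < T (r, c) ∧ ((r, c' + 1) ∈ YBoxes l → T (r, c) ≤ m (T (r, c' + 1)))
          then 1 else 0 : ℕ)
        = if T (r, c') < T (r, c) ∧ (l.getD r 0 ≤ c' + 1 ∨ T (r, c) ≤ m (T (r, c' + 1)))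
            then 1 else 0 := by
    intro c' _
    refine if_congr (and_congr_right fun _ => ?_) rfl rfl
    rw [mem_row hr]
    constructor
    · intro h
      rcases le_or_gt (l.getD r 0) (c' + 1) with h' | h'
      · exact Or.inl h'
      · exact Or.inr (h h')
    · rintro (h' | h') hlt
      · omega
      · exact h'
  have hB : ∀ c' ∈ Finset.Ico (c + 1) (l.getD r 0),
      (if T (r, c') < T (r, c) ∧ T (r, c) ≤ m (T (r, c')) then 1 else 0 : ℕ)
        = if T (r, c') < T (r, c) ∧ (l.getD r 0 ≤ c' ∨ T (r, c) ≤ m (T (r, c')))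
            then 1 else 0 := by
    intro c' hc'
    rw [Finset.mem_Ico] at hc'
    refine if_congr (and_congr_right fun _ => ?_) rfl rfl
    constructor
    · exact Or.inr
    · rintro (h' | h')
      · omega
      · exact h'
  refine (Finset.sum_congr rfl hA).trans (Eq.trans ?_ (Finset.sum_congr rfl hB).symm)
  refine telescope_key (c + 1) (l.getD r 0)
    (fun x => l.getD r 0 ≤ x ∨ T (r, c) ≤ m (T (r, x)))
    (fun x => T (r, x) < T (r, c)) ?_ (Or.inl le_rfl) ?_
  · intro h
    exact Or.inr (hadm r c hb1 ((mem_row hr).mpr h))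
  · intro c' _ hc'L hiff
    have hmem : (r, c') ∈ YBoxes l := (mem_row hr).mpr hc'L
    by_cases huc : T (r, c) ≤ m (T (r, c'))
    · have huc' : l.getD r 0 ≤ c' ∨ T (r, c) ≤ m (T (r, c')) := Or.inr huc
      have hnot : ¬(l.getD r 0 ≤ c' + 1 ∨ T (r, c) ≤ m (T (r, c' + 1))) :=
        fun h => hiff ⟨fun _ => h, fun _ => huc'⟩
      have h1 : c' + 1 < l.getD r 0 := lt_of_not_ge fun h => hnot (Or.inl h)
      have h2 : m (T (r, c' + 1)) < T (r, c) := lt_of_not_ge fun h => hnot (Or.inr h)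
      exact lt_of_le_of_lt (hadm r c' hmem ((mem_row hr).mpr h1)) h2
    · exact lt_of_le_of_lt (hself _ hmem) (lt_of_not_ge huc)

private lemma ite_or_split {A A' C : Prop} [Decidable (A ∨ C)] [Decidable A'] [Decidable C]
    (hAA : A ↔ A') (h : ¬(A ∧ C)) :
    (if A ∨ C then 1 else 0 : ℕ)
      = (if A' then (1 : ℕ) else 0) + (if C then 1 else 0) := by
  classical
  by_cases hA : A
  · by_cases hC : C
    · exact absurd ⟨hA, hC⟩ h
    · simp [hA, hC, hAA.mp hA]
  · have hA' : ¬A' := fun a' => hA (hAA.mpr a')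
    by_cases hC : C <;> simp [hA, hC, hA']

/-- for an admissible tableau `T` of shape `l` for `m`, the Tymoczko
statistic `dim T` equals the number of ordered pairs `(i,k)` of entries such that
(`i` lies in the same row as `k` strictly to its left, or `i` lies in a strictly lower
row than `k`) and `k < i ≤ m k`. -/
theorem dimT_eq_unified_count
    (n : ℕ) (m : ℕ → ℕ) (hm : IsHess n m) (l : List ℕ) (hl : IsPartitionOf n l)
    (T : ℕ × ℕ → ℕ) (hT : IsTableau n l T) (hadm : Admissible m l T) :
    dimT m l T
    = ((YBoxes l ×ˢ YBoxes l).filter fun pp =>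
        ((pp.1.1 = pp.2.1 ∧ pp.1.2 < pp.2.2) ∨ pp.2.1 < pp.1.1) ∧
        T pp.2 < T pp.1 ∧ T pp.1 ≤ m (T pp.2)).card := by
  classical
  unfold dimT
  rw [Finset.card_filter, Finset.card_filter, Finset.sum_product, Finset.sum_product]
  refine Finset.sum_congr rfl ?_
  rintro ⟨r, c⟩ hb1
  have e1 : ∀ b2 ∈ YBoxes l,
      (if (r = b2.1 ∧ c < b2.2 ∧ T b2 < T (r, c) ∧
            ((b2.1, b2.2 + 1) ∈ YBoxes l → T (r, c) ≤ m (T (b2.1, b2.2 + 1)))) ∨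
          (b2.1 < r ∧ T b2 < T (r, c) ∧ T (r, c) ≤ m (T b2)) then 1 else 0 : ℕ)
        = (if b2.1 = r ∧ c < b2.2 ∧ T b2 < T (r, c) ∧
            ((b2.1, b2.2 + 1) ∈ YBoxes l → T (r, c) ≤ m (T (b2.1, b2.2 + 1))) then 1 else 0)
          + (if b2.1 < r ∧ T b2 < T (r, c) ∧ T (r, c) ≤ m (T b2) then 1 else 0) := by
    intro b2 _
    refine ite_or_split ?_ ?_
    · constructor
      · rintro ⟨h1, h⟩; exact ⟨h1.symm, h⟩
      · rintro ⟨h1, h⟩; exact ⟨h1.symm, h⟩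
    · rintro ⟨⟨h1, -⟩, h2, -⟩
      omega
  have e2 : ∀ b2 ∈ YBoxes l,
      (if ((r = b2.1 ∧ c < b2.2) ∨ b2.1 < r) ∧ T b2 < T (r, c) ∧ T (r, c) ≤ m (T b2)
          then 1 else 0 : ℕ)
        = (if b2.1 = r ∧ c < b2.2 ∧ T b2 < T (r, c) ∧ T (r, c) ≤ m (T b2) then 1 else 0)
          + (if b2.1 < r ∧ T b2 < T (r, c) ∧ T (r, c) ≤ m (T b2) then 1 else 0) := by
    intro b2 _
    simp only [or_and_right]
    refine ite_or_split ?_ ?_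
    · constructor
      · rintro ⟨⟨h1, h2⟩, h⟩; exact ⟨h1.symm, h2, h⟩
      · rintro ⟨h1, h2, h⟩; exact ⟨⟨h1.symm, h2⟩, h⟩
    · rintro ⟨⟨⟨h1, -⟩, -⟩, h2, -⟩
      omega
  calc (∑ b2 ∈ YBoxes l, if (r = b2.1 ∧ c < b2.2 ∧ T b2 < T (r, c) ∧
            ((b2.1, b2.2 + 1) ∈ YBoxes l → T (r, c) ≤ m (T (b2.1, b2.2 + 1)))) ∨
          (b2.1 < r ∧ T b2 < T (r, c) ∧ T (r, c) ≤ m (T b2)) then 1 else 0 : ℕ)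
      = ∑ b2 ∈ YBoxes l, ((if b2.1 = r ∧ c < b2.2 ∧ T b2 < T (r, c) ∧
            ((b2.1, b2.2 + 1) ∈ YBoxes l → T (r, c) ≤ m (T (b2.1, b2.2 + 1))) then 1 else 0)
          + (if b2.1 < r ∧ T b2 < T (r, c) ∧ T (r, c) ≤ m (T b2) then 1 else 0)) :=
        Finset.sum_congr rfl e1
    _ = (∑ b2 ∈ YBoxes l, if b2.1 = r ∧ c < b2.2 ∧ T b2 < T (r, c) ∧
            ((b2.1, b2.2 + 1) ∈ YBoxes l → T (r, c) ≤ m (T (b2.1, b2.2 + 1))) then 1 else 0)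
          + ∑ b2 ∈ YBoxes l,
            (if b2.1 < r ∧ T b2 < T (r, c) ∧ T (r, c) ≤ m (T b2) then 1 else 0) :=
        Finset.sum_add_distrib
    _ = (∑ b2 ∈ YBoxes l, if b2.1 = r ∧ c < b2.2 ∧ T b2 < T (r, c) ∧ T (r, c) ≤ m (T b2)
            then 1 else 0)
          + ∑ b2 ∈ YBoxes l,
            (if b2.1 < r ∧ T b2 < T (r, c) ∧ T (r, c) ≤ m (T b2) then 1 else 0) := by
        rw [row_count hm hT hadm hb1]
    _ = ∑ b2 ∈ YBoxes l, ((if b2.1 = r ∧ c < b2.2 ∧ T b2 < T (r, c) ∧ T (r, c) ≤ m (T b2)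
            then 1 else 0)
          + (if b2.1 < r ∧ T b2 < T (r, c) ∧ T (r, c) ≤ m (T b2) then 1 else 0)) :=
        Finset.sum_add_distrib.symm
    _ = ∑ b2 ∈ YBoxes l, (if ((r = b2.1 ∧ c < b2.2) ∨ b2.1 < r) ∧ T b2 < T (r, c) ∧
          T (r, c) ≤ m (T b2) then 1 else 0) := (Finset.sum_congr rfl e2).symm


end
end

section
/- Let q and p_0, p_1, …, p_N be Laurent polynomials with real coefficients such that q = Σ_{ℓ=0}^{N} p_ℓ t^ℓ. Assume q is palindromic, each p_ℓ is palindromic, and for every ℓ > 0 all coefficients of p_ℓ are nonnegative. Then p_ℓ = 0 for all ℓ > 0, and hence q = p_0. -/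
open LaurentPolynomial

/-- A Laurent polynomial is palindromic if it is invariant under `t ↦ t⁻¹`. -/
def Palindromic (p : LaurentPolynomial ℝ) : Prop := LaurentPolynomial.invert p = p

noncomputable def Dfun (p : LaurentPolynomial ℝ) : ℝ := p.coeff.sum fun k a => (k : ℝ) * a

noncomputable def Dhom : LaurentPolynomial ℝ →+ ℝ :=
  (Finsupp.liftAddHom fun (k : ℤ) => AddMonoidHom.mulLeft (k : ℝ)).comp
    AddMonoidAlgebra.coeffAddEquiv.toAddMonoidHom

lemma Dhom_eq (p : LaurentPolynomial ℝ) : Dhom p = Dfun p := rfl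

noncomputable def Sfun (p : LaurentPolynomial ℝ) : ℝ := p.coeff.sum fun _ a => a

lemma Dfun_pal (p : LaurentPolynomial ℝ) (h : Palindromic p) : Dfun p = 0 := by
  have h1 : Dfun p = -Dfun p := by
    conv_lhs => rw [← h]
    unfold Dfun
    have hmap : (invert p : LaurentPolynomial ℝ).coeff = Finsupp.mapDomain Neg.neg p.coeff := by
      ext k
      have := Finsupp.mapDomain_apply ((neg_injective : Function.Injective (Neg.neg : ℤ → ℤ))) p.coeff (-k)
      simp only [neg_neg] at this
      rw [this, invert_apply]
    rw [hmap,
      Finsupp.sum_mapDomain_index (by simp) (by intro k a b; ring)]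
    rw [Finsupp.sum, Finsupp.sum, ← Finset.sum_neg_distrib]
    apply Finset.sum_congr rfl
    intro k _
    push_cast
    ring
  linarith

lemma mul_T_eq (p : LaurentPolynomial ℝ) (n : ℤ) :
    (p * T n).coeff = Finsupp.mapDomain (· + n) p.coeff := by
  ext k
  have h1 : (p * T n : LaurentPolynomial ℝ).coeff k = p.coeff (k - n) * 1 := by
    simpa [sub_eq_add_neg] using AddMonoidAlgebra.coeff_mul_single_apply p 1 n k
  have h2 : Finsupp.mapDomain (· + n) p.coeff ((k - n) + n) = p.coeff (k - n) :=
    Finsupp.mapDomain_apply (add_left_injective n) p.coeff (k - n)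
  rw [h1, mul_one, ← h2, sub_add_cancel]

lemma Dfun_mul_T (p : LaurentPolynomial ℝ) (n : ℤ) :
    Dfun (p * T n) = (n : ℝ) * Sfun p + Dfun p := by
  rw [Dfun, mul_T_eq]
  unfold Dfun Sfun
  rw [Finsupp.sum_mapDomain_index (by simp) (by intro k a b; ring)]
  rw [Finsupp.mul_sum, ← Finsupp.sum_add]
  apply Finsupp.sum_congr
  intro k _
  push_cast
  ring

/-- if `q = Σ_{ℓ=0}^{N} p_ℓ t^ℓ` with `q` and all `p_ℓ` palindromic
Laurent polynomials, and for every `ℓ > 0` all coefficients of `p_ℓ` are nonnegative,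
then `p_ℓ = 0` for all `ℓ > 0`, and hence `q = p_0`. -/
theorem palindromic_decomposition
    (N : ℕ) (q : LaurentPolynomial ℝ) (p : ℕ → LaurentPolynomial ℝ)
    (hq : q = ∑ ℓ ∈ Finset.range (N + 1), p ℓ * T (ℓ : ℤ))
    (hqpal : Palindromic q) (hppal : ∀ ℓ ≤ N, Palindromic (p ℓ))
    (hnonneg : ∀ ℓ, 0 < ℓ → ℓ ≤ N → ∀ k : ℤ, 0 ≤ (p ℓ).coeff k) :
    (∀ ℓ, 0 < ℓ → ℓ ≤ N → p ℓ = 0) ∧ q = p 0 := by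
  have Dadd : ∀ s : Finset ℕ, ∀ f : ℕ → LaurentPolynomial ℝ,
      Dfun (∑ ℓ ∈ s, f ℓ) = ∑ ℓ ∈ s, Dfun (f ℓ) := by
    intro s f
    simp only [← Dhom_eq]
    exact map_sum Dhom f s
  have key : ∑ ℓ ∈ Finset.range (N + 1), (ℓ : ℝ) * Sfun (p ℓ) = 0 := by
    have h0 : Dfun q = 0 := Dfun_pal q hqpal
    rw [hq, Dadd] at h0
    rw [← h0]
    apply Finset.sum_congr rfl
    intro ℓ hℓ
    rw [Finset.mem_range] at hℓ
    rw [Dfun_mul_T, Dfun_pal (p ℓ) (hppal ℓ (by omega))]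
    simp
  have hterm : ∀ ℓ ∈ Finset.range (N + 1), (0:ℝ) ≤ (ℓ : ℝ) * Sfun (p ℓ) := by
    intro ℓ hℓ
    rw [Finset.mem_range] at hℓ
    rcases Nat.eq_zero_or_pos ℓ with h | h
    · simp [h]
    · apply mul_nonneg (by positivity)
      unfold Sfun Finsupp.sum
      exact Finset.sum_nonneg fun k _ => hnonneg ℓ h (by omega) k
  have hzero : ∀ ℓ, 0 < ℓ → ℓ ≤ N → p ℓ = 0 := by
    intro ℓ hpos hle
    have := (Finset.sum_eq_zero_iff_of_nonneg hterm).mp key ℓ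
      (Finset.mem_range.mpr (by omega))
    have hS : Sfun (p ℓ) = 0 := by
      have hℓne : (ℓ : ℝ) ≠ 0 := by positivity
      rcases mul_eq_zero.mp this with h | h
      · exact absurd h hℓne
      · exact h
    have hall : ∀ k ∈ (p ℓ).coeff.support, (p ℓ).coeff k = 0 := by
      apply (Finset.sum_eq_zero_iff_of_nonneg ?_).mp hS
      exact fun k _ => hnonneg ℓ hpos hle k
    ext k
    by_cases hk : k ∈ (p ℓ).coeff.support
    · simpa using hall k hk
    · simpa using Finsupp.notMem_support_iff.mp hk
  refine ⟨hzero, ?_⟩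
  rw [hq, Finset.sum_range_succ'] 
  have : ∀ ℓ ∈ Finset.range N, p (ℓ + 1) * T ((ℓ + 1 : ℕ) : ℤ) = 0 := by
    intro ℓ hℓ
    rw [Finset.mem_range] at hℓ
    rw [hzero (ℓ + 1) (by omega) (by omega), zero_mul]
  rw [Finset.sum_congr rfl this, Finset.sum_const, smul_zero, zero_add]
  simp [T_zero]
end

section
/- Let X be a topological space, Y a subset of X, and x a point of X. Suppose {𝒰_α}_{α∈I} is a nonempty collection of fundamental systems of open neighborhoods of x, each of which is good relative to Y. Then the union 𝒰 := ⋃_{α∈I} 𝒰_α is also a fundamental system of open neighborhoods of x that is good relative to Y. -/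
/-- `𝒰` is a fundamental system of open neighborhoods of `x`. -/
def IsFundamentalSystem {X : Type*} [TopologicalSpace X] (x : X) (𝒰 : Set (Set X)) : Prop :=
  (∀ U ∈ 𝒰, IsOpen U ∧ x ∈ U) ∧ ∀ W : Set X, IsOpen W → x ∈ W → ∃ U ∈ 𝒰, U ⊆ W

/-- A collection `𝒰` of subsets of `X` is good relative to `Y` if for all `U, V ∈ 𝒰` with
`V ⊆ U`, the inclusion `V∖Y ↪ U∖Y` is a homotopy equivalence: there is a continuous map
`r : U∖Y → V∖Y` such that both composites with the inclusion are homotopic to the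
identity. -/
def IsGoodRel {X : Type*} [TopologicalSpace X] (Y : Set X) (𝒰 : Set (Set X)) : Prop :=
  ∀ U ∈ 𝒰, ∀ V ∈ 𝒰, ∀ h : V ⊆ U,
    ∃ r : C(↥(U \ Y), ↥(V \ Y)),
      (r.comp ⟨Set.inclusion (Set.diff_subset_diff_left h),
          continuous_inclusion (Set.diff_subset_diff_left h)⟩).Homotopic
        (ContinuousMap.id _) ∧
      ((⟨Set.inclusion (Set.diff_subset_diff_left h),
          continuous_inclusion (Set.diff_subset_diff_left h)⟩ :
            C(↥(V \ Y), ↥(U \ Y))).comp r).Homotopic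
        (ContinuousMap.id _)

/-- Sandwich lemma: if `b ∘ a` and `c ∘ b` are homotopy equivalences, so is `c`. -/
lemma sandwich_he {A B C D : Type*} [TopologicalSpace A] [TopologicalSpace B]
    [TopologicalSpace C] [TopologicalSpace D]
    (a : C(A, B)) (b : C(B, C)) (c : C(C, D))
    (rp : C(C, A)) (hp1 : (rp.comp (b.comp a)).Homotopic (ContinuousMap.id A))
    (hp2 : ((b.comp a).comp rp).Homotopic (ContinuousMap.id C))
    (rq : C(D, B)) (hq1 : (rq.comp (c.comp b)).Homotopic (ContinuousMap.id B))
    (hq2 : ((c.comp b).comp rq).Homotopic (ContinuousMap.id D)) :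
    ∃ r : C(D, C), (r.comp c).Homotopic (ContinuousMap.id C) ∧
      (c.comp r).Homotopic (ContinuousMap.id D) := by
  refine ⟨b.comp rq, ?_, ?_⟩
  · -- (b ∘ rq) ∘ c ≃ id_C
    have h1 : ((b.comp rq).comp c).Homotopic
        ((((b.comp rq).comp c).comp (b.comp a)).comp rp) := by
      have h := ContinuousMap.Homotopic.comp (ContinuousMap.Homotopic.refl ((b.comp rq).comp c)) hp2.symm
      simpa [ContinuousMap.comp_assoc] using h
    have hmid : (((b.comp rq).comp c).comp b).Homotopic b := by
      have h' := ContinuousMap.Homotopic.comp (ContinuousMap.Homotopic.refl b) hq1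
      simpa [ContinuousMap.comp_assoc] using h'
    have h2 : ((((b.comp rq).comp c).comp (b.comp a)).comp rp).Homotopic
        ((b.comp a).comp rp) := by
      have := ContinuousMap.Homotopic.comp
        (ContinuousMap.Homotopic.comp hmid (ContinuousMap.Homotopic.refl a)) (ContinuousMap.Homotopic.refl rp)
      simpa [ContinuousMap.comp_assoc] using this
    exact (h1.trans h2).trans hp2
  · -- c ∘ (b ∘ rq) = (c∘b)∘rq ≃ id_D
    simpa [ContinuousMap.comp_assoc] using hq2

/-- a nonempty union of fundamental systems of open neighborhoods of
`x`, each good relative to `Y`, is again a fundamental system of open neighborhoods of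
`x` good relative to `Y`. -/
theorem union_of_good_fundamental_systems
    {X : Type*} [TopologicalSpace X] (Y : Set X) (x : X)
    {I : Type*} [Nonempty I] (𝒰 : I → Set (Set X))
    (hfund : ∀ a : I, IsFundamentalSystem x (𝒰 a))
    (hgood : ∀ a : I, IsGoodRel Y (𝒰 a)) :
    IsFundamentalSystem x (⋃ a, 𝒰 a) ∧ IsGoodRel Y (⋃ a, 𝒰 a) := by
  constructor
  · constructor
    · rintro U hU
      obtain ⟨a, hUa⟩ := Set.mem_iUnion.mp hU
      exact (hfund a).1 U hUa
    · intro W hW hxW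
      obtain ⟨a⟩ := ‹Nonempty I›
      obtain ⟨U, hU, hUW⟩ := (hfund a).2 W hW hxW
      exact ⟨U, Set.mem_iUnion.mpr ⟨a, hU⟩, hUW⟩
  · intro U hU V hV hVU
    obtain ⟨a, hUa⟩ := Set.mem_iUnion.mp hU
    obtain ⟨b, hVb⟩ := Set.mem_iUnion.mp hV
    -- V is an open nbhd of x
    obtain ⟨hVopen, hxV⟩ := (hfund b).1 V hVb
    -- W ∈ 𝒰 a with W ⊆ V
    obtain ⟨W, hWa, hWV⟩ := (hfund a).2 V hVopen hxV
    obtain ⟨hWopen, hxW⟩ := (hfund a).1 W hWa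
    -- W' ∈ 𝒰 b with W' ⊆ W
    obtain ⟨W', hW'b, hW'W⟩ := (hfund b).2 W hWopen hxW
    -- homotopy equivalences: incl (W\Y → U\Y), incl (W'\Y → V\Y)
    obtain ⟨rq, hq1, hq2⟩ := hgood a U hUa W hWa (hWV.trans hVU)
    obtain ⟨rp, hp1, hp2⟩ := hgood b V hVb W' hW'b (hW'W.trans hWV)
    -- inclusions
    set iA : C(↥(W' \ Y), ↥(W \ Y)) :=
      ⟨Set.inclusion (Set.diff_subset_diff_left hW'W),
        continuous_inclusion (Set.diff_subset_diff_left hW'W)⟩ with hiA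
    set iB : C(↥(W \ Y), ↥(V \ Y)) :=
      ⟨Set.inclusion (Set.diff_subset_diff_left hWV),
        continuous_inclusion (Set.diff_subset_diff_left hWV)⟩ with hiB
    set iC : C(↥(V \ Y), ↥(U \ Y)) :=
      ⟨Set.inclusion (Set.diff_subset_diff_left hVU),
        continuous_inclusion (Set.diff_subset_diff_left hVU)⟩ with hiC
    have hBA : iB.comp iA =
        (⟨Set.inclusion (Set.diff_subset_diff_left (hW'W.trans hWV)),
          continuous_inclusion (Set.diff_subset_diff_left (hW'W.trans hWV))⟩ :
            C(↥(W' \ Y), ↥(V \ Y))) := rfl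
    have hCB : iC.comp iB =
        (⟨Set.inclusion (Set.diff_subset_diff_left (hWV.trans hVU)),
          continuous_inclusion (Set.diff_subset_diff_left (hWV.trans hVU))⟩ :
            C(↥(W \ Y), ↥(U \ Y))) := rfl
    refine sandwich_he iA iB iC rp ?_ ?_ rq ?_ ?_
    · rw [hBA]; exact hp1
    · rw [hBA]; exact hp2
    · rw [hCB]; exact hq1
    · rw [hCB]; exact hq2
end
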